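/- Consider k bidders and n items, where for each bidder i and item j the value v_{ij} is drawn from a finitely supported probability distribution F_{ij} on ℝ_{≥0}, all k·n values being mutually independent. A (randomized) mechanism is a pair (x, p) where for every type profile v, x(v) ∈ [0,1]^{k×n} satisfies ∑_{i=1}^k x_{ij}(v) ≤ 1 for every item j, and p(v) ∈ ℝ^k. The mechanism is IC if for every bidder i, every type v_i, every report b_i in the support, and every profile v_{−i} of the other bidders: v_i · x_i(v_i, v_{−i}) − p_i(v_i, v_{−i}) ≥ v_i · x_i(b_i, v_{−i}) − p_i(b_i, v_{−i}); it is IR if v_i · x_i(v) − p_i(v) ≥ 0 for every profile v. Its revenue is E_v[∑_{i=1}^k p_i(v)], where v is drawn from the product distribution. For S ⊆ {1,…,n}, let OPT(S) be the supremum of revenue over all IC and IR mechanisms with x_{ij}(v) = 0 for all j ∉ S and all v. Then for every S ⊆ {1,…,n}: OPT({1,…,n}) ≤ OPT(S) + ∑_{j ∉ S} E[ max_i v_{ij} ]. -/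

import Mathlib

open Finset

/-! Multi-item auctions with `k` additive bidders, `n` items, and finitely supported
independent value distributions: bidder `i`'s value for item `j` is drawn from the
distribution with (finite) support `s i j ⊆ ℝ≥0` and probability mass function `q i j`,
all `k·n` values being mutually independent (so a profile `v` has probability
`∏ i ∏ j, q i j (v i j)`). -/

/-- The finite set of all type profiles. -/
noncomputable def allProfiles (k n : ℕ) (s : Fin k → Fin n → Finset ℝ) :
    Finset (Fin k → Fin n → ℝ) :=
  Fintype.piFinset fun i => Fintype.piFinset fun j => s i j

/-- The probability of the type profile `v` under the product distribution. -/
noncomputable def profileProb (k n : ℕ) (q : Fin k → Fin n → ℝ → ℝ)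
    (v : Fin k → Fin n → ℝ) : ℝ :=
  ∏ i : Fin k, ∏ j : Fin n, q i j (v i j)

/-- A mechanism `(x, p)` is feasible if allocations are in `[0,1]` and each item is
allocated at most once. -/
def Feasible (k n : ℕ) (s : Fin k → Fin n → Finset ℝ)
    (x : (Fin k → Fin n → ℝ) → Fin k → Fin n → ℝ) : Prop :=
  ∀ v ∈ allProfiles k n s, (∀ i j, 0 ≤ x v i j ∧ x v i j ≤ 1) ∧
    ∀ j : Fin n, (∑ i : Fin k, x v i j) ≤ 1

/-- Incentive compatibility: for every bidder `i`, every profile (every own type and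
every profile of the others in the support), and every report `bi` in the support,
truth-telling maximizes the quasi-linear utility. -/
def IC (k n : ℕ) (s : Fin k → Fin n → Finset ℝ)
    (x : (Fin k → Fin n → ℝ) → Fin k → Fin n → ℝ)
    (p : (Fin k → Fin n → ℝ) → Fin k → ℝ) : Prop :=
  ∀ v ∈ allProfiles k n s, ∀ i : Fin k, ∀ bi : Fin n → ℝ, (∀ j, bi j ∈ s i j) →
    (∑ j : Fin n, v i j * x (Function.update v i bi) i j) -
        p (Function.update v i bi) i ≤
      (∑ j : Fin n, v i j * x v i j) - p v i

/-- Individual rationality: a truthful bidder's utility is nonnegative. -/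
def IR (k n : ℕ) (s : Fin k → Fin n → Finset ℝ)
    (x : (Fin k → Fin n → ℝ) → Fin k → Fin n → ℝ)
    (p : (Fin k → Fin n → ℝ) → Fin k → ℝ) : Prop :=
  ∀ v ∈ allProfiles k n s, ∀ i : Fin k, 0 ≤ (∑ j : Fin n, v i j * x v i j) - p v i

/-- The expected revenue of mechanism `(x, p)`. -/
noncomputable def revenue (k n : ℕ) (s : Fin k → Fin n → Finset ℝ)
    (q : Fin k → Fin n → ℝ → ℝ) (p : (Fin k → Fin n → ℝ) → Fin k → ℝ) : ℝ :=
  ∑ v ∈ allProfiles k n s, profileProb k n q v * ∑ i : Fin k, p v i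

/-- `OPT k n s q S`: the supremum of expected revenue over all IC and IR mechanisms that
never allocate any item outside `S`. -/
noncomputable def OPT (k n : ℕ) (s : Fin k → Fin n → Finset ℝ)
    (q : Fin k → Fin n → ℝ → ℝ) (S : Finset (Fin n)) : ℝ :=
  sSup {r : ℝ | ∃ x : (Fin k → Fin n → ℝ) → Fin k → Fin n → ℝ,
    ∃ p : (Fin k → Fin n → ℝ) → Fin k → ℝ,
      Feasible k n s x ∧ IC k n s x p ∧ IR k n s x p ∧
      (∀ v ∈ allProfiles k n s, ∀ i : Fin k, ∀ j : Fin n, j ∉ S → x v i j = 0) ∧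
      r = revenue k n s q p}

variable {k n : ℕ}

/-- Merge two profiles: coordinates in `S` from `v`, outside from `w`. -/
noncomputable def mrg (S : Finset (Fin n)) (v w : Fin k → Fin n → ℝ) : Fin k → Fin n → ℝ :=
  fun i j => if j ∈ S then v i j else w i j

lemma mem_allProfiles {s : Fin k → Fin n → Finset ℝ} {v : Fin k → Fin n → ℝ} :
    v ∈ allProfiles k n s ↔ ∀ i j, v i j ∈ s i j := by
  simp [allProfiles, Fintype.mem_piFinset]

lemma mrg_mem (S : Finset (Fin n)) {s : Fin k → Fin n → Finset ℝ} {v w : Fin k → Fin n → ℝ}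
    (hv : v ∈ allProfiles k n s) (hw : w ∈ allProfiles k n s) :
    mrg S v w ∈ allProfiles k n s := by
  rw [mem_allProfiles] at *
  intro i j
  unfold mrg
  split
  · exact hv i j
  · exact hw i j

lemma mrg_mrg (S : Finset (Fin n)) (v w : Fin k → Fin n → ℝ) :
    mrg S (mrg S v w) (mrg S w v) = v := by
  funext i j
  unfold mrg
  split <;> simp [*]

lemma prob_nonneg (q : Fin k → Fin n → ℝ → ℝ) (hq0 : ∀ i j x, 0 ≤ q i j x)
    (v : Fin k → Fin n → ℝ) : 0 ≤ profileProb k n q v :=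
  Finset.prod_nonneg fun i _ => Finset.prod_nonneg fun j _ => hq0 i j _

set_option maxHeartbeats 1000000 in
lemma sum_prob_eq_one (s : Fin k → Fin n → Finset ℝ) (q : Fin k → Fin n → ℝ → ℝ)
    (hq1 : ∀ i j, ∑ x ∈ s i j, q i j x = 1) :
    ∑ v ∈ allProfiles k n s, profileProb k n q v = 1 := by
  unfold allProfiles profileProb
  have h1 : ∑ v ∈ Fintype.piFinset (fun i => Fintype.piFinset fun j => s i j),
      ∏ i : Fin k, ∏ j : Fin n, q i j (v i j)
      = ∏ i : Fin k, ∑ u ∈ Fintype.piFinset fun j => s i j, ∏ j : Fin n, q i j (u j) :=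
    (Finset.prod_univ_sum (fun i => Fintype.piFinset fun j => s i j) (fun i u => ∏ j : Fin n, q i j (u j))).symm
  rw [h1]
  refine Finset.prod_eq_one fun i _ => ?_
  have h2 : ∑ u ∈ Fintype.piFinset fun j => s i j, ∏ j : Fin n, q i j (u j)
      = ∏ j : Fin n, ∑ x ∈ s i j, q i j x :=
    (Finset.prod_univ_sum (fun j => s i j) (fun j x => q i j x)).symm
  rw [h2]
  exact Finset.prod_eq_one fun j _ => hq1 i j

lemma prob_mrg_mul (S : Finset (Fin n)) (q : Fin k → Fin n → ℝ → ℝ)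
    (v w : Fin k → Fin n → ℝ) :
    profileProb k n q (mrg S v w) * profileProb k n q (mrg S w v)
      = profileProb k n q v * profileProb k n q w := by
  unfold profileProb mrg
  rw [← Finset.prod_mul_distrib, ← Finset.prod_mul_distrib]
  refine Finset.prod_congr rfl fun i _ => ?_
  rw [← Finset.prod_mul_distrib, ← Finset.prod_mul_distrib]
  refine Finset.prod_congr rfl fun j _ => ?_
  split <;> ring

lemma double_sum (S : Finset (Fin n)) (s : Fin k → Fin n → Finset ℝ)
    (q : Fin k → Fin n → ℝ → ℝ) (hq1 : ∀ i j, ∑ x ∈ s i j, q i j x = 1)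
    (f : (Fin k → Fin n → ℝ) → ℝ) :
    ∑ v ∈ allProfiles k n s, ∑ w ∈ allProfiles k n s,
      profileProb k n q v * profileProb k n q w * f (mrg S v w)
      = ∑ u ∈ allProfiles k n s, profileProb k n q u * f u := by
  classical
  rw [← Finset.sum_product']
  have key : ∑ p ∈ allProfiles k n s ×ˢ allProfiles k n s,
      profileProb k n q p.1 * profileProb k n q p.2 * f (mrg S p.1 p.2)
      = ∑ p ∈ allProfiles k n s ×ˢ allProfiles k n s,
        profileProb k n q p.1 * profileProb k n q p.2 * f p.1 := by
    refine Finset.sum_nbij' (fun p => (mrg S p.1 p.2, mrg S p.2 p.1))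
      (fun p => (mrg S p.1 p.2, mrg S p.2 p.1)) ?_ ?_ ?_ ?_ ?_
    · rintro ⟨v, w⟩ hp
      rw [Finset.mem_product] at hp ⊢
      exact ⟨mrg_mem S hp.1 hp.2, mrg_mem S hp.2 hp.1⟩
    · rintro ⟨v, w⟩ hp
      rw [Finset.mem_product] at hp ⊢
      exact ⟨mrg_mem S hp.1 hp.2, mrg_mem S hp.2 hp.1⟩
    · rintro ⟨v, w⟩ _
      simp [mrg_mrg]
    · rintro ⟨v, w⟩ _
      simp [mrg_mrg]
    · rintro ⟨v, w⟩ _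
      simp only
      rw [prob_mrg_mul]
  rw [key, Finset.sum_product]
  have : ∀ v, ∑ w ∈ allProfiles k n s,
      profileProb k n q v * profileProb k n q w * f v
      = profileProb k n q v * f v := by
    intro v
    rw [← Finset.sum_mul, ← Finset.mul_sum, sum_prob_eq_one s q hq1, mul_one]
  rw [Finset.sum_congr rfl fun v _ => this v]

/-- **Decomposition of the optimal revenue.** For every subset `S` of the items,
`OPT([n]) ≤ OPT(S) + ∑_{j ∉ S} E[max_i v i j]`. -/
theorem opt_revenue_decomposition (k n : ℕ) (hk : 0 < k)
    (s : Fin k → Fin n → Finset ℝ) (hsne : ∀ i j, (s i j).Nonempty)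
    (hs : ∀ i j, ∀ x ∈ s i j, (0 : ℝ) ≤ x)
    (q : Fin k → Fin n → ℝ → ℝ)
    (hq0 : ∀ i j x, 0 ≤ q i j x)
    (hq1 : ∀ i j, ∑ x ∈ s i j, q i j x = 1)
    (S : Finset (Fin n)) :
    OPT k n s q Finset.univ ≤ OPT k n s q S +
      ∑ j ∈ Sᶜ, ∑ v ∈ allProfiles k n s, profileProb k n q v *
        Finset.univ.sup' (Finset.univ_nonempty_iff.mpr (Fin.pos_iff_nonempty.mp hk))
          (fun i => v i j) := by
  classical
  set P := allProfiles k n s with hP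
  set pr := profileProb k n q with hpr
  have hne : (Finset.univ : Finset (Fin k)).Nonempty :=
    Finset.univ_nonempty_iff.mpr (Fin.pos_iff_nonempty.mp hk)
  have hprne : ∀ v, 0 ≤ pr v := prob_nonneg q hq0
  set C := ∑ j ∈ Sᶜ, ∑ v ∈ P, pr v * Finset.univ.sup' hne (fun i => v i j) with hC
  -- bounded above
  have hbdd : BddAbove {r : ℝ | ∃ x : (Fin k → Fin n → ℝ) → Fin k → Fin n → ℝ,
      ∃ p : (Fin k → Fin n → ℝ) → Fin k → ℝ,
      Feasible k n s x ∧ IC k n s x p ∧ IR k n s x p ∧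
      (∀ v ∈ allProfiles k n s, ∀ i : Fin k, ∀ j : Fin n, j ∉ S → x v i j = 0) ∧
      r = revenue k n s q p} := by
    refine ⟨∑ v ∈ P, pr v * ∑ i : Fin k, ∑ j : Fin n, v i j, ?_⟩
    rintro r ⟨x, p, hf, -, hir, -, rfl⟩
    refine Finset.sum_le_sum fun v hv => ?_
    refine mul_le_mul_of_nonneg_left ?_ (hprne v)
    refine Finset.sum_le_sum fun i _ => ?_
    have h1 := hir v hv i
    have h2 : ∑ j : Fin n, v i j * x v i j ≤ ∑ j : Fin n, v i j := by
      refine Finset.sum_le_sum fun j _ => ?_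
      have hv0 : (0:ℝ) ≤ v i j := hs i j _ (mem_allProfiles.1 hv i j)
      calc v i j * x v i j ≤ v i j * 1 :=
            mul_le_mul_of_nonneg_left ((hf v hv).1 i j).2 hv0
        _ = v i j := mul_one _
    linarith
  -- the set for univ is nonempty
  have hne' : {r : ℝ | ∃ x : (Fin k → Fin n → ℝ) → Fin k → Fin n → ℝ,
      ∃ p : (Fin k → Fin n → ℝ) → Fin k → ℝ,
      Feasible k n s x ∧ IC k n s x p ∧ IR k n s x p ∧
      (∀ v ∈ allProfiles k n s, ∀ i : Fin k, ∀ j : Fin n, j ∉ Finset.univ → x v i j = 0) ∧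
      r = revenue k n s q p}.Nonempty := by
    refine ⟨revenue k n s q (fun _ _ => 0), fun _ _ _ => 0, fun _ _ => 0, ?_, ?_, ?_, ?_, rfl⟩
    · intro v _; exact ⟨fun i j => ⟨le_refl 0, zero_le_one⟩, fun j => by simp⟩
    · intro v _ i bi _; simp
    · intro v _ i; simp
    · intro v _ i j hj; rfl
  rw [OPT]
  refine csSup_le hne' ?_
  rintro r ⟨x, p, hfeas, hic, hir, -, rfl⟩
  -- the marginal mechanism
  set x' : (Fin k → Fin n → ℝ) → Fin k → Fin n → ℝ :=
    fun v i j => if j ∈ S then ∑ w ∈ P, pr w * x (mrg S v w) i j else 0 with hx'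
  set p' : (Fin k → Fin n → ℝ) → Fin k → ℝ :=
    fun v i => ∑ w ∈ P, pr w *
      (p (mrg S v w) i - ∑ j ∈ Sᶜ, w i j * x (mrg S v w) i j) with hp'
  have hsum1 : ∑ w ∈ P, pr w = 1 := sum_prob_eq_one s q hq1
  -- utility computation
  have util : ∀ (v : Fin k → Fin n → ℝ) (i : Fin k) (t : Fin n → ℝ),
      (∑ j : Fin n, t j * x' v i j) - p' v i
        = ∑ w ∈ P, pr w *
            ((∑ j : Fin n, (if j ∈ S then t j else w i j) * x (mrg S v w) i j)
              - p (mrg S v w) i) := by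
    intro v i t
    have h1 : ∑ j : Fin n, t j * x' v i j
        = ∑ w ∈ P, pr w * ∑ j : Fin n,
            (if j ∈ S then t j * x (mrg S v w) i j else 0) := by
      calc ∑ j : Fin n, t j * x' v i j
          = ∑ j : Fin n, ∑ w ∈ P,
              (if j ∈ S then pr w * (t j * x (mrg S v w) i j) else 0) := by
            refine Finset.sum_congr rfl fun j _ => ?_
            by_cases hj : j ∈ S
            · simp only [hx', if_pos hj, Finset.mul_sum]
              exact Finset.sum_congr rfl fun w _ => by ring
            · simp [hx', hj]
        _ = ∑ w ∈ P, ∑ j : Fin n,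
              (if j ∈ S then pr w * (t j * x (mrg S v w) i j) else 0) :=
            Finset.sum_comm
        _ = ∑ w ∈ P, pr w * ∑ j : Fin n,
              (if j ∈ S then t j * x (mrg S v w) i j else 0) := by
            refine Finset.sum_congr rfl fun w _ => ?_
            rw [Finset.mul_sum]
            refine Finset.sum_congr rfl fun j _ => ?_
            split <;> simp
    rw [h1, hp', ← Finset.sum_sub_distrib]
    refine Finset.sum_congr rfl fun w _ => ?_
    have h2 : ∑ j : Fin n, (if j ∈ S then t j else w i j) * x (mrg S v w) i j
        = (∑ j : Fin n, (if j ∈ S then t j * x (mrg S v w) i j else 0))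
          + ∑ j ∈ Sᶜ, w i j * x (mrg S v w) i j := by
      have e : ∑ j ∈ Sᶜ, w i j * x (mrg S v w) i j
          = ∑ j : Fin n, (if j ∈ Sᶜ then w i j * x (mrg S v w) i j else 0) := by
        rw [Finset.sum_ite_mem, Finset.univ_inter]
      rw [e, ← Finset.sum_add_distrib]
      refine Finset.sum_congr rfl fun j _ => ?_
      by_cases hj : j ∈ S <;> simp [hj]
    rw [h2]; ring
  -- membership of the new mechanism in the OPT S set
  have hfeas' : Feasible k n s x' := by
    intro v hv
    constructor
    · intro i j
      constructor
      · rw [hx']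
        dsimp only
        split
        · exact Finset.sum_nonneg fun w hw =>
            mul_nonneg (hprne w) ((hfeas _ (mrg_mem S hv hw)).1 i j).1
        · exact le_refl 0
      · rw [hx']
        dsimp only
        split
        · calc ∑ w ∈ P, pr w * x (mrg S v w) i j ≤ ∑ w ∈ P, pr w * 1 :=
              Finset.sum_le_sum fun w hw => mul_le_mul_of_nonneg_left
                ((hfeas _ (mrg_mem S hv hw)).1 i j).2 (hprne w)
            _ = 1 := by rw [← Finset.sum_mul, hsum1, one_mul]
        · exact zero_le_one
    · intro j
      rw [hx']
      dsimp only
      by_cases hj : j ∈ S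
      · simp only [if_pos hj]
        rw [Finset.sum_comm]
        calc ∑ w ∈ P, ∑ i : Fin k, pr w * x (mrg S v w) i j
            = ∑ w ∈ P, pr w * ∑ i : Fin k, x (mrg S v w) i j := by
              refine Finset.sum_congr rfl fun w _ => (Finset.mul_sum _ _ _).symm
          _ ≤ ∑ w ∈ P, pr w * 1 := Finset.sum_le_sum fun w hw =>
              mul_le_mul_of_nonneg_left ((hfeas _ (mrg_mem S hv hw)).2 j) (hprne w)
          _ = 1 := by rw [← Finset.sum_mul, hsum1, one_mul]
      · simp [hj]
  have hic' : IC k n s x' p' := by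
    intro v hv i bi hbi
    rw [util v i (v i), util (Function.update v i bi) i (v i)]
    refine Finset.sum_le_sum fun w hw => ?_
    refine mul_le_mul_of_nonneg_left ?_ (hprne w)
    have hmem : mrg S v w ∈ allProfiles k n s := mrg_mem S hv hw
    have hupd : mrg S (Function.update v i bi) w
        = Function.update (mrg S v w) i (fun j => if j ∈ S then bi j else w i j) := by
      funext i' j
      unfold mrg
      rcases eq_or_ne i' i with rfl | h
      · simp [Function.update_self]
      · simp [Function.update_of_ne h, mrg]
    have hrep : ∀ j, (if j ∈ S then bi j else w i j) ∈ s i j := by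
      intro j
      split
      · exact hbi j
      · exact mem_allProfiles.1 hw i j
    have := hic (mrg S v w) hmem i _ hrep
    have hrow : ∀ j, (if j ∈ S then v i j else w i j) = mrg S v w i j := fun j => rfl
    simp only [hrow, hupd] at *
    exact this
  have hir' : IR k n s x' p' := by
    intro v hv i
    rw [util v i (v i)]
    refine Finset.sum_nonneg fun w hw => mul_nonneg (hprne w) ?_
    have := hir (mrg S v w) (mrg_mem S hv hw) i
    have hrow : ∀ j, (if j ∈ S then v i j else w i j) = mrg S v w i j := fun j => rfl
    simp only [hrow]
    exact this
  have hzero' : ∀ v ∈ allProfiles k n s, ∀ i : Fin k, ∀ j : Fin n, j ∉ S → x' v i j = 0 := by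
    intro v _ i j hj
    rw [hx']
    simp [hj]
  have hmem' : revenue k n s q p' ∈ {r : ℝ | ∃ x : (Fin k → Fin n → ℝ) → Fin k → Fin n → ℝ,
      ∃ p : (Fin k → Fin n → ℝ) → Fin k → ℝ,
      Feasible k n s x ∧ IC k n s x p ∧ IR k n s x p ∧
      (∀ v ∈ allProfiles k n s, ∀ i : Fin k, ∀ j : Fin n, j ∉ S → x v i j = 0) ∧
      r = revenue k n s q p} := ⟨x', p', hfeas', hic', hir', hzero', rfl⟩
  have hrev' : revenue k n s q p' ≤ OPT k n s q S := le_csSup hbdd hmem'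
  -- revenue identity
  have hrevcalc : revenue k n s q p'
      = revenue k n s q p - ∑ u ∈ P, pr u *
          ∑ i : Fin k, ∑ j ∈ Sᶜ, u i j * x u i j := by
    have e1 : revenue k n s q p'
        = ∑ v ∈ P, ∑ w ∈ P, pr v * pr w *
            (∑ i : Fin k, (p (mrg S v w) i - ∑ j ∈ Sᶜ, w i j * x (mrg S v w) i j)) := by
      unfold revenue
      refine Finset.sum_congr rfl fun v _ => ?_
      rw [hp']
      dsimp only
      rw [Finset.sum_comm, Finset.mul_sum]
      refine Finset.sum_congr rfl fun w _ => ?_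
      rw [Finset.mul_sum, Finset.mul_sum]
      refine Finset.sum_congr rfl fun i _ => ?_
      ring
    have e2 : ∀ v ∈ P, ∀ w ∈ P,
        (∑ i : Fin k, (p (mrg S v w) i - ∑ j ∈ Sᶜ, w i j * x (mrg S v w) i j))
          = (fun u => ∑ i : Fin k, (p u i - ∑ j ∈ Sᶜ, u i j * x u i j)) (mrg S v w) := by
      intro v _ w _
      dsimp only
      refine Finset.sum_congr rfl fun i _ => ?_
      congr 1
      refine Finset.sum_congr rfl fun j hj => ?_
      have : j ∉ S := Finset.mem_compl.1 hj
      unfold mrg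
      rw [if_neg this]
    rw [e1, Finset.sum_congr rfl fun v hv => Finset.sum_congr rfl fun w hw => by
      rw [e2 v hv w hw]]
    rw [double_sum S s q hq1 (fun u => ∑ i : Fin k, (p u i - ∑ j ∈ Sᶜ, u i j * x u i j))]
    unfold revenue
    rw [← Finset.sum_sub_distrib]
    refine Finset.sum_congr rfl fun u _ => ?_
    rw [Finset.sum_sub_distrib]
    ring
  -- bounding the welfare term by C
  have hwel : ∑ u ∈ P, pr u * ∑ i : Fin k, ∑ j ∈ Sᶜ, u i j * x u i j ≤ C := by
    have step : ∀ u ∈ P, pr u * ∑ i : Fin k, ∑ j ∈ Sᶜ, u i j * x u i j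
        = ∑ j ∈ Sᶜ, pr u * ∑ i : Fin k, u i j * x u i j := by
      intro u _
      rw [Finset.sum_comm, Finset.mul_sum]
    rw [Finset.sum_congr rfl step, Finset.sum_comm, hC]
    refine Finset.sum_le_sum fun j _ => Finset.sum_le_sum fun u hu =>
      mul_le_mul_of_nonneg_left ?_ (hprne u)
    have hsup0 : 0 ≤ Finset.univ.sup' hne fun i => u i j := by
      obtain ⟨i0⟩ := Fin.pos_iff_nonempty.mp hk
      exact le_trans (hs i0 j _ (mem_allProfiles.1 hu i0 j))
        (Finset.le_sup' (fun i => u i j) (Finset.mem_univ i0))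
    calc ∑ i : Fin k, u i j * x u i j
        ≤ ∑ i : Fin k, (Finset.univ.sup' hne fun i => u i j) * x u i j :=
          Finset.sum_le_sum fun i _ => mul_le_mul_of_nonneg_right
            (Finset.le_sup' (fun i => u i j) (Finset.mem_univ i)) ((hfeas u hu).1 i j).1
      _ = (Finset.univ.sup' hne fun i => u i j) * ∑ i : Fin k, x u i j :=
          (Finset.mul_sum _ _ _).symm
      _ ≤ (Finset.univ.sup' hne fun i => u i j) * 1 :=
          mul_le_mul_of_nonneg_left ((hfeas u hu).2 j) hsup0
      _ = _ := mul_one _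
  have hfin : revenue k n s q p ≤ OPT k n s q S + C := by linarith
  exact hfin
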